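/- Let n be a positive integer, let p1, p2 be linearly independent vectors in ℤ^n with all entries positive, let r ∈ ℤ^n, and let k1, k2 be integers. Let M1, M2 be positive integers, set a2 = M2·p2 + r and a1 = M1·p1 + a2. Let B = {x ∈ ℝ^n : 0 ≤ x_j ≤ 1 for all j}. Assume β'2, β2 are real numbers with sup{a2·x : x ∈ B, p1·x = k1+1, p2·x ≤ k2} < β'2 ≤ β2 < inf{a2·x : x ∈ B, p1·x = k1+1, p2·x ≥ k2+1} (these sets being nonempty). Set β'1 = β'2 + (k1+1)·M1 and β1 = β2 + (k1+1)·M1. Then every x ∈ B satisfying β'1 ≤ a1·x ≤ β1 and p1·x = k1+1 also satisfies k2 < p2·x < k2+1; in particular, no integer vector x ∈ {0,1}^n satisfies β'1 ≤ a1·x ≤ β1 and p1·x = k1+1. -/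
import Mathlib


open Finset

theorem ckp_branch_integer_infeasible (n : ℕ) (hn : 0 < n)
    (p1 p2 r : Fin n → ℤ)
    (hp1pos : ∀ i, 0 < p1 i) (hp2pos : ∀ i, 0 < p2 i)
    (hli : LinearIndependent ℤ ![p1, p2])
    (k1 k2 : ℤ) (M1 M2 : ℤ) (hM1 : 0 < M1) (hM2 : 0 < M2)
    (a2 : Fin n → ℤ) (ha2 : a2 = fun i => M2 * p2 i + r i)
    (a1 : Fin n → ℤ) (ha1 : a1 = fun i => M1 * p1 i + a2 i)
    (B : Set (Fin n → ℝ)) (hB : B = {x | ∀ j, 0 ≤ x j ∧ x j ≤ 1})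
    (S3 S4 : Set (Fin n → ℝ))
    (hS3 : S3 = {x ∈ B | ∑ i, (p1 i : ℝ) * x i = (k1 : ℝ) + 1 ∧
      ∑ i, (p2 i : ℝ) * x i ≤ (k2 : ℝ)})
    (hS4 : S4 = {x ∈ B | ∑ i, (p1 i : ℝ) * x i = (k1 : ℝ) + 1 ∧
      (k2 : ℝ) + 1 ≤ ∑ i, (p2 i : ℝ) * x i})
    (hS3ne : S3.Nonempty) (hS4ne : S4.Nonempty)
    (β'2 β2 : ℝ)
    (hsup : sSup ((fun x => ∑ i, (a2 i : ℝ) * x i) '' S3) < β'2)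
    (hββ : β'2 ≤ β2)
    (hinf : β2 < sInf ((fun x => ∑ i, (a2 i : ℝ) * x i) '' S4))
    (β'1 β1 : ℝ)
    (hβ'1 : β'1 = β'2 + ((k1 : ℝ) + 1) * (M1 : ℝ))
    (hβ1 : β1 = β2 + ((k1 : ℝ) + 1) * (M1 : ℝ)) :
    (∀ x ∈ B, β'1 ≤ ∑ i, (a1 i : ℝ) * x i → ∑ i, (a1 i : ℝ) * x i ≤ β1 →
      ∑ i, (p1 i : ℝ) * x i = (k1 : ℝ) + 1 →
      (k2 : ℝ) < ∑ i, (p2 i : ℝ) * x i ∧ ∑ i, (p2 i : ℝ) * x i < (k2 : ℝ) + 1) ∧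
    ¬ ∃ x : Fin n → ℤ, (∀ j, x j = 0 ∨ x j = 1) ∧
      β'1 ≤ ∑ i, (a1 i : ℝ) * (x i : ℝ) ∧ ∑ i, (a1 i : ℝ) * (x i : ℝ) ≤ β1 ∧
      ∑ i, (p1 i : ℝ) * (x i : ℝ) = (k1 : ℝ) + 1 := by

  subst hS3 hS4 hB ha1 ha2 hβ'1 hβ1
  have key : ∀ x ∈ {x : Fin n → ℝ | ∀ j, 0 ≤ x j ∧ x j ≤ 1},
      β'2 + ((k1 : ℝ) + 1) * (M1 : ℝ) ≤ ∑ i, (((fun i => M1 * p1 i + (fun i => M2 * p2 i + r i) i) i : ℤ) : ℝ) * x i →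
      ∑ i, (((fun i => M1 * p1 i + (fun i => M2 * p2 i + r i) i) i : ℤ) : ℝ) * x i ≤ β2 + ((k1 : ℝ) + 1) * (M1 : ℝ) →
      ∑ i, (p1 i : ℝ) * x i = (k1 : ℝ) + 1 →
      (k2 : ℝ) < ∑ i, (p2 i : ℝ) * x i ∧ ∑ i, (p2 i : ℝ) * x i < (k2 : ℝ) + 1 := by
    intro x hx h1 h2 h3
    set f : (Fin n → ℝ) → ℝ := fun x => ∑ i, (((fun i => M2 * p2 i + r i) i : ℤ) : ℝ) * x i with hf
    have hsplit : ∑ i, (((fun i => M1 * p1 i + (fun i => M2 * p2 i + r i) i) i : ℤ) : ℝ) * x i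
        = (M1 : ℝ) * (∑ i, (p1 i : ℝ) * x i) + f x := by
      simp only [hf, Finset.mul_sum, ← Finset.sum_add_distrib]
      apply Finset.sum_congr rfl
      intro i _
      push_cast
      ring
    rw [hsplit, h3] at h1 h2
    have hlo : β'2 ≤ f x := by linarith
    have hhi : f x ≤ β2 := by linarith
    constructor
    · by_contra hle
      push_neg at hle
      have hmem : x ∈ {x ∈ {x : Fin n → ℝ | ∀ j, 0 ≤ x j ∧ x j ≤ 1} |
          ∑ i, (p1 i : ℝ) * x i = (k1 : ℝ) + 1 ∧ ∑ i, (p2 i : ℝ) * x i ≤ (k2 : ℝ)} :=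
        ⟨hx, h3, hle⟩
      have hbdd : BddAbove (f '' {x ∈ {x : Fin n → ℝ | ∀ j, 0 ≤ x j ∧ x j ≤ 1} |
          ∑ i, (p1 i : ℝ) * x i = (k1 : ℝ) + 1 ∧ ∑ i, (p2 i : ℝ) * x i ≤ (k2 : ℝ)}) := by
        refine ⟨∑ i, |(((fun i => M2 * p2 i + r i) i : ℤ) : ℝ)|, ?_⟩
        rintro v ⟨y, ⟨hy, -, -⟩, rfl⟩
        apply Finset.sum_le_sum
        intro i _
        have h0 := (hy i).1
        have h1' := (hy i).2
        have := le_abs_self ((((fun i => M2 * p2 i + r i) i : ℤ)) : ℝ)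
        have := abs_nonneg ((((fun i => M2 * p2 i + r i) i : ℤ)) : ℝ)
        nlinarith
      have : f x ≤ sSup (f '' {x ∈ {x : Fin n → ℝ | ∀ j, 0 ≤ x j ∧ x j ≤ 1} |
          ∑ i, (p1 i : ℝ) * x i = (k1 : ℝ) + 1 ∧ ∑ i, (p2 i : ℝ) * x i ≤ (k2 : ℝ)}) :=
        le_csSup hbdd ⟨x, hmem, rfl⟩
      linarith
    · by_contra hle
      push_neg at hle
      have hmem : x ∈ {x ∈ {x : Fin n → ℝ | ∀ j, 0 ≤ x j ∧ x j ≤ 1} |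
          ∑ i, (p1 i : ℝ) * x i = (k1 : ℝ) + 1 ∧ (k2 : ℝ) + 1 ≤ ∑ i, (p2 i : ℝ) * x i} :=
        ⟨hx, h3, hle⟩
      have hbdd : BddBelow (f '' {x ∈ {x : Fin n → ℝ | ∀ j, 0 ≤ x j ∧ x j ≤ 1} |
          ∑ i, (p1 i : ℝ) * x i = (k1 : ℝ) + 1 ∧ (k2 : ℝ) + 1 ≤ ∑ i, (p2 i : ℝ) * x i}) := by
        refine ⟨-∑ i, |(((fun i => M2 * p2 i + r i) i : ℤ) : ℝ)|, ?_⟩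
        rintro v ⟨y, ⟨hy, -, -⟩, rfl⟩
        rw [← Finset.sum_neg_distrib]
        apply Finset.sum_le_sum
        intro i _
        have h0 := (hy i).1
        have h1' := (hy i).2
        have := neg_abs_le ((((fun i => M2 * p2 i + r i) i : ℤ)) : ℝ)
        have := abs_nonneg ((((fun i => M2 * p2 i + r i) i : ℤ)) : ℝ)
        nlinarith
      have : sInf (f '' {x ∈ {x : Fin n → ℝ | ∀ j, 0 ≤ x j ∧ x j ≤ 1} |
          ∑ i, (p1 i : ℝ) * x i = (k1 : ℝ) + 1 ∧ (k2 : ℝ) + 1 ≤ ∑ i, (p2 i : ℝ) * x i}) ≤ f x :=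
        csInf_le hbdd ⟨x, hmem, rfl⟩
      linarith
  refine ⟨key, ?_⟩
  rintro ⟨x, hx01, h1, h2, h3⟩
  have hxB : (fun i => (x i : ℝ)) ∈ {x : Fin n → ℝ | ∀ j, 0 ≤ x j ∧ x j ≤ 1} := by
    intro j
    rcases hx01 j with h | h <;> simp [h]
  obtain ⟨hlt1, hlt2⟩ := key _ hxB h1 h2 h3
  have hint : ((∑ i, p2 i * x i : ℤ) : ℝ) = ∑ i, (p2 i : ℝ) * (x i : ℝ) := by push_cast; ring
  rw [← hint] at hlt1 hlt2
  have : (k2 : ℝ) + 1 ≤ ((∑ i, p2 i * x i : ℤ) : ℝ) := by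
    exact_mod_cast Int.add_one_le_of_lt (by exact_mod_cast hlt1)
  linarith
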